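/- Let I ⊂ ℕ_+^n be a finite downward-closed multi-index set and (u^v)_{v∈I} elements of a vector space, extended by u^v = 0 if any component of v is zero. Then the combination-technique identity holds: Σ_{v∈I} Δ[u^v] = Σ_{v∈I} c_v u^v, where Δ[u^v] = Σ_{j∈{0,1}^n} (−1)^{|j|} u^{v−j} and c_v = Σ_{j∈{0,1}^n : v+j ∈ I} (−1)^{|j|}. -/
import Mathlib


open Finset

/-- Combination technique identity: for a finite downward-closed index set `I`,
`∑_{v ∈ I} Δ[u^v] = ∑_{v ∈ I} c_v u^v` with
`c_v = ∑_{j ∈ {0,1}^n, v+j ∈ I} (-1)^{|j|}`. -/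
theorem combination_technique_identity (n : ℕ)
    (E : Type*) [AddCommGroup E] [Module ℝ E]
    (I : Finset (Fin n → ℕ+))
    (hdc : ∀ v ∈ I, ∀ w : Fin n → ℕ+, (∀ i, w i ≤ v i) → w ∈ I)
    (u : (Fin n → ℕ) → E)
    (hzero : ∀ v : Fin n → ℕ, (∃ i, v i = 0) → u v = 0) :
    (∑ v ∈ I, ∑ j : Fin n → Bool,
        ((-1 : ℝ) ^ (Finset.univ.filter (fun i => j i = true)).card) •
          u (fun i => (v i : ℕ) - (if j i then 1 else 0)))
    = ∑ v ∈ I,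
        (∑ j : Fin n → Bool,
          if (fun i => if j i then v i + 1 else v i) ∈ I then
            ((-1 : ℝ) ^ (Finset.univ.filter (fun i => j i = true)).card) else 0) •
        u (fun i => (v i : ℕ)) := by
  classical
  have hRHS : ∀ v : Fin n → ℕ+,
      (∑ j : Fin n → Bool,
          if (fun i => if j i then v i + 1 else v i) ∈ I then
            ((-1 : ℝ) ^ (Finset.univ.filter (fun i => j i = true)).card) else 0) •
        u (fun i => (v i : ℕ))
      = ∑ j : Fin n → Bool,
          if (fun i => if j i then v i + 1 else v i) ∈ I then
            ((-1 : ℝ) ^ (Finset.univ.filter (fun i => j i = true)).card) •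
              u (fun i => (v i : ℕ)) else 0 := by
    intro v
    rw [Finset.sum_smul]
    refine Finset.sum_congr rfl fun j _ => ?_
    split <;> simp
  simp_rw [hRHS]
  rw [← Finset.sum_product', ← Finset.sum_product']
  set f : (Fin n → ℕ+) × (Fin n → Bool) → E := fun p =>
    ((-1 : ℝ) ^ (Finset.univ.filter (fun i => p.2 i = true)).card) •
      u (fun i => (p.1 i : ℕ) - (if p.2 i then 1 else 0)) with hf
  set g : (Fin n → ℕ+) × (Fin n → Bool) → E := fun p =>
    if (fun i => if p.2 i then p.1 i + 1 else p.1 i) ∈ I then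
      ((-1 : ℝ) ^ (Finset.univ.filter (fun i => p.2 i = true)).card) •
        u (fun i => (p.1 i : ℕ)) else 0 with hg
  set A : Finset ((Fin n → ℕ+) × (Fin n → Bool)) :=
    (I ×ˢ Finset.univ).filter (fun p => ∀ i, p.2 i = true → 1 < (p.1 i : ℕ)) with hA
  set B : Finset ((Fin n → ℕ+) × (Fin n → Bool)) :=
    (I ×ˢ Finset.univ).filter
      (fun p => (fun i => if p.2 i then p.1 i + 1 else p.1 i) ∈ I) with hB
  have hL : ∑ p ∈ I ×ˢ Finset.univ, f p = ∑ p ∈ A, f p := by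
    rw [hA, Finset.sum_filter_of_ne]
    intro p _ hne i hji
    by_contra hlt
    apply hne
    have h1 : (p.1 i : ℕ) = 1 := le_antisymm (not_lt.mp hlt) (p.1 i).2
    have : u (fun i => (p.1 i : ℕ) - (if p.2 i then 1 else 0)) = 0 := by
      apply hzero
      exact ⟨i, by simp [hji, h1]⟩
    simp [hf, this]
  have hR : ∑ p ∈ I ×ˢ Finset.univ, g p = ∑ p ∈ B, g p := by
    rw [hB, Finset.sum_filter_of_ne]
    intro p _ hne
    by_contra hcond
    exact hne (if_neg hcond)
  rw [hL, hR]
  have hsub : ∀ (a : ℕ+), 1 < (a : ℕ) → ((a - 1 : ℕ+) : ℕ) = (a : ℕ) - 1 := by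
    intro a ha
    exact PNat.sub_coe a 1 ▸ if_pos (by exact_mod_cast ha)
  refine Finset.sum_nbij'
    (i := fun p => (fun i => if p.2 i then p.1 i - 1 else p.1 i, p.2))
    (j := fun q => (fun i => if q.2 i then q.1 i + 1 else q.1 i, q.2)) ?_ ?_ ?_ ?_ ?_
  · intro p hp
    rw [hA, Finset.mem_filter, Finset.mem_product] at hp
    obtain ⟨⟨hv, -⟩, hcond⟩ := hp
    have heq : (fun i => if p.2 i = true then
        (if p.2 i = true then p.1 i - 1 else p.1 i) + 1
        else (if p.2 i = true then p.1 i - 1 else p.1 i)) = p.1 := by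
      funext i
      by_cases h : p.2 i = true
      · simp only [h, if_true]
        apply PNat.coe_injective
        have h1 := hcond i h
        push_cast [hsub (p.1 i) h1]
        omega
      · simp [h]
    rw [hB, Finset.mem_filter, Finset.mem_product]
    refine ⟨⟨?_, Finset.mem_univ _⟩, ?_⟩
    · apply hdc p.1 hv
      intro i
      by_cases h : p.2 i = true
      · simp only [h, if_true]
        rw [← PNat.coe_le_coe, hsub _ (hcond i h)]
        omega
      · simp [h]
    · simpa [heq] using hv
  · intro q hq
    rw [hB, Finset.mem_filter, Finset.mem_product] at hq
    obtain ⟨⟨-, -⟩, hcond⟩ := hq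
    rw [hA, Finset.mem_filter, Finset.mem_product]
    refine ⟨⟨hcond, Finset.mem_univ _⟩, ?_⟩
    intro i h
    simp only at h
    show 1 < ((if q.2 i = true then q.1 i + 1 else q.1 i : ℕ+) : ℕ)
    rw [if_pos h]
    push_cast
    exact Nat.succ_lt_succ (q.1 i).2
  · intro p hp
    rw [hA, Finset.mem_filter, Finset.mem_product] at hp
    obtain ⟨⟨-, -⟩, hcond⟩ := hp
    refine Prod.ext (funext fun i => ?_) rfl
    by_cases h : p.2 i = true
    · simp only [h, if_true]
      apply PNat.coe_injective
      have h1 := hcond i h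
      push_cast [hsub (p.1 i) h1]
      omega
    · simp [h]
  · intro q hq
    refine Prod.ext (funext fun i => ?_) rfl
    by_cases h : q.2 i = true
    · simp only [h, if_true]
      apply PNat.coe_injective
      rw [hsub (q.1 i + 1) (by push_cast; exact Nat.succ_lt_succ (q.1 i).2)]
      push_cast
      omega
    · simp [h]
  · intro p hp
    rw [hA, Finset.mem_filter, Finset.mem_product] at hp
    obtain ⟨⟨hv, -⟩, hcond⟩ := hp
    have heq : (fun i => if p.2 i = true then
        (if p.2 i = true then p.1 i - 1 else p.1 i) + 1
        else (if p.2 i = true then p.1 i - 1 else p.1 i)) = p.1 := by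
      funext i
      by_cases h : p.2 i = true
      · simp only [h, if_true]
        apply PNat.coe_injective
        have h1 := hcond i h
        push_cast [hsub (p.1 i) h1]
        omega
      · simp [h]
    simp only [hf, hg, heq, hv, if_true]
    congr 1
    congr 1
    funext i
    by_cases h : p.2 i = true
    · simp [h, hsub (p.1 i) (hcond i h)]
    · simp [h]
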